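/- The partial transpose of a separable bipartite state is positive semidefinite (Peres criterion): if σ = Σᵢ pᵢ σᵢ^A ⊗ σᵢ^B with pᵢ ≥ 0, Σpᵢ = 1, and σᵢ^A, σᵢ^B density operators, then σ^{T_A} ≥ 0. -/

import Mathlib

open Matrix BigOperators
open scoped ComplexOrder

noncomputable section

/-- Index type of the bipartite Hilbert space `H_A ⊗ H_B`. -/
abbrev BIdx (a b : ℕ) := Fin a × Fin b

/-- Partial transpose on the A factor: `(X^{T_A})_{(i,k),(j,l)} = X_{(j,k),(i,l)}`. -/
def ptA {a b : ℕ} (X : Matrix (BIdx a b) (BIdx a b) ℂ) : Matrix (BIdx a b) (BIdx a b) ℂ :=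
  fun p q => X (q.1, p.2) (p.1, q.2)

/-- Kronecker product of a matrix on `H_A` and a matrix on `H_B`. -/
def kron {a b : ℕ} (A : Matrix (Fin a) (Fin a) ℂ) (B : Matrix (Fin b) (Fin b) ℂ) :
    Matrix (BIdx a b) (BIdx a b) ℂ :=
  fun p q => A p.1 q.1 * B p.2 q.2

/-- A density operator: positive semidefinite with unit trace. -/
def IsDensity {m : Type*} [Fintype m] (ρ : Matrix m m ℂ) : Prop :=
  ρ.PosSemidef ∧ ρ.trace = 1

/-- The set of separable bipartite states. -/
def SepSet2 (a b : ℕ) : Set (Matrix (BIdx a b) (BIdx a b) ℂ) :=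
  convexHull ℝ { σ | ∃ A B, IsDensity A ∧ IsDensity B ∧ σ = kron A B }

/-- An entanglement witness: unit-trace Hermitian, nonnegative on all separable states. -/
def IsWitness2 {a b : ℕ} (W : Matrix (BIdx a b) (BIdx a b) ℂ) : Prop :=
  W.IsHermitian ∧ W.trace = 1 ∧ ∀ σ ∈ SepSet2 a b, 0 ≤ ((W * σ).trace).re

/-- The witnessed entanglement `E_W(ρ) = max {0, -inf_W Tr(Wρ)}`. -/
def Ew2 {a b : ℕ} (ρ : Matrix (BIdx a b) (BIdx a b) ℂ) : ℝ :=
  max 0 (sSup { x : ℝ | ∃ W, IsWitness2 W ∧ x = -(((W * ρ).trace).re) })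

/-- A decomposable entanglement witness: `W = pP + (1-p)Q^{T_A}`, unit trace. -/
def IsDecompWitness {a b : ℕ} (W : Matrix (BIdx a b) (BIdx a b) ℂ) : Prop :=
  W.trace = 1 ∧ ∃ p : ℝ, 0 ≤ p ∧ p ≤ 1 ∧
    ∃ P Q : Matrix (BIdx a b) (BIdx a b) ℂ, P.PosSemidef ∧ Q.PosSemidef ∧
      W = p • P + (1 - p) • ptA Q

/-- The decomposable witnessed entanglement. -/
def EdW {a b : ℕ} (ρ : Matrix (BIdx a b) (BIdx a b) ℂ) : ℝ :=
  max 0 (sSup { x : ℝ | ∃ W, IsDecompWitness W ∧ x = -(((W * ρ).trace).re) })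


open Kronecker
lemma kron_eq_kronecker {a b : ℕ} (A : Matrix (Fin a) (Fin a) ℂ) (B : Matrix (Fin b) (Fin b) ℂ) :
    kron A B = A ⊗ₖ B := rfl

lemma kron_posSemidef {a b : ℕ} {A : Matrix (Fin a) (Fin a) ℂ} {B : Matrix (Fin b) (Fin b) ℂ}
    (hA : A.PosSemidef) (hB : B.PosSemidef) : (kron A B).PosSemidef := by
  obtain ⟨M, rfl⟩ : ∃ M : Matrix (Fin a) (Fin a) ℂ, A = Mᴴ * M := by
    open scoped MatrixOrder in
    obtain ⟨M, hM⟩ := CStarAlgebra.nonneg_iff_eq_star_mul_self.mp hA.nonneg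
    exact ⟨M, hM⟩
  obtain ⟨N, rfl⟩ : ∃ N : Matrix (Fin b) (Fin b) ℂ, B = Nᴴ * N := by
    open scoped MatrixOrder in
    obtain ⟨N, hN⟩ := CStarAlgebra.nonneg_iff_eq_star_mul_self.mp hB.nonneg
    exact ⟨N, hN⟩
  rw [kron_eq_kronecker, Matrix.mul_kronecker_mul]
  have h : Mᴴ ⊗ₖ Nᴴ = (M ⊗ₖ N)ᴴ := by
    ext p q
    simp [Matrix.conjTranspose_apply, Matrix.kroneckerMap_apply]
  rw [h]
  exact Matrix.posSemidef_conjTranspose_mul_self _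

lemma psd_smul {n : Type*} [Fintype n] {c : ℝ} (hc : 0 ≤ c) {M : Matrix n n ℂ}
    (hM : M.PosSemidef) : (c • M).PosSemidef := by
  have : c • M = (c : ℂ) • M := by
    ext i j; simp [Matrix.smul_apply, Complex.real_smul]
  rw [this]
  constructor
  · unfold Matrix.IsHermitian
    rw [Matrix.conjTranspose_smul, hM.1.eq]
    congr 1
    simp
  · intro x
    have := hM.2 x
    simp only [Matrix.smul_apply, smul_eq_mul, Finsupp.sum, Finset.sum_mul, Finset.mul_sum] at this ⊢
    simp only [mul_assoc, mul_left_comm _ (c : ℂ), ← Finset.mul_sum] at this ⊢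
    exact mul_nonneg (by exact_mod_cast hc) this


/-- Peres criterion: the partial transpose of a separable state is
positive semidefinite. -/
theorem peres_criterion
    {a b : ℕ} {ι : Type*} [Fintype ι] (p : ι → ℝ)
    (A : ι → Matrix (Fin a) (Fin a) ℂ) (B : ι → Matrix (Fin b) (Fin b) ℂ)
    (hp : ∀ i, 0 ≤ p i) (hsum : ∑ i, p i = 1)
    (hA : ∀ i, IsDensity (A i)) (hB : ∀ i, IsDensity (B i)) :
    (ptA (∑ i, p i • kron (A i) (B i))).PosSemidef := by
  have key : ptA (∑ i, p i • kron (A i) (B i)) = ∑ i, p i • kron (A i)ᵀ (B i) := by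
    ext pq rs
    simp [ptA, kron, Matrix.sum_apply, Matrix.smul_apply, Matrix.transpose_apply]
  rw [key]
  exact Finset.sum_induction _ _ (fun x y hx hy => hx.add hy) Matrix.PosSemidef.zero
    (fun i _ => psd_smul (hp i) (kron_posSemidef ((hA i).1).transpose (hB i).1))
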